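/- Let E be a cocomplete monoidal model category whose class of weak equivalences is ⊗-perfect. Then the monoid axiom of Schwede–Shipley holds (the monoidal saturation of the class of trivial cofibrations is contained in the class of weak equivalences) if and only if for every trivial cofibration j and every object Z, the morphism j ⊗ 1_Z is a couniversal weak equivalence. -/

import Mathlib

open CategoryTheory CategoryTheory.Limits

universe v u

/-- A model structure on a category: classes of weak equivalences, cofibrations and
fibrations, satisfying the model category axioms (two-out-of-three, closure of the
three classes under retracts, lifting, and factorization). -/
structure ModelStruct (C : Type u) [Category.{v} C] : Type (max u v) where
  /-- weak equivalences -/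
  W : MorphismProperty C
  /-- cofibrations -/
  Cof : MorphismProperty C
  /-- fibrations -/
  Fib : MorphismProperty C
  W_of_isIso : ∀ {X Y : C} (f : X ⟶ Y), IsIso f → W f
  W_comp : ∀ {X Y Z : C} (f : X ⟶ Y) (g : Y ⟶ Z), W f → W g → W (f ≫ g)
  W_of_comp_left : ∀ {X Y Z : C} (f : X ⟶ Y) (g : Y ⟶ Z), W f → W (f ≫ g) → W g
  W_of_comp_right : ∀ {X Y Z : C} (f : X ⟶ Y) (g : Y ⟶ Z), W g → W (f ≫ g) → W f
  W_retract : ∀ {X Y X' Y' : C} (f : X ⟶ Y) (f' : X' ⟶ Y') (i : X ⟶ X') (r : X' ⟶ X)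
      (j : Y ⟶ Y') (s : Y' ⟶ Y), i ≫ r = 𝟙 X → j ≫ s = 𝟙 Y →
      i ≫ f' = f ≫ j → r ≫ f = f' ≫ s → W f' → W f
  Cof_retract : ∀ {X Y X' Y' : C} (f : X ⟶ Y) (f' : X' ⟶ Y') (i : X ⟶ X') (r : X' ⟶ X)
      (j : Y ⟶ Y') (s : Y' ⟶ Y), i ≫ r = 𝟙 X → j ≫ s = 𝟙 Y →
      i ≫ f' = f ≫ j → r ≫ f = f' ≫ s → Cof f' → Cof f
  Fib_retract : ∀ {X Y X' Y' : C} (f : X ⟶ Y) (f' : X' ⟶ Y') (i : X ⟶ X') (r : X' ⟶ X)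
      (j : Y ⟶ Y') (s : Y' ⟶ Y), i ≫ r = 𝟙 X → j ≫ s = 𝟙 Y →
      i ≫ f' = f ≫ j → r ≫ f = f' ≫ s → Fib f' → Fib f
  lift : ∀ {A B X Y : C} (i : A ⟶ B) (p : X ⟶ Y), Cof i → Fib p → (W i ∨ W p) →
      ∀ (u : A ⟶ X) (v : B ⟶ Y), u ≫ p = i ≫ v → ∃ l : B ⟶ X, i ≫ l = u ∧ l ≫ p = v
  factorization_cof_trivFib : ∀ {X Y : C} (f : X ⟶ Y), ∃ (Z : C) (i : X ⟶ Z) (p : Z ⟶ Y),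
      Cof i ∧ Fib p ∧ W p ∧ i ≫ p = f
  factorization_trivCof_fib : ∀ {X Y : C} (f : X ⟶ Y), ∃ (Z : C) (i : X ⟶ Z) (p : Z ⟶ Y),
      Cof i ∧ W i ∧ Fib p ∧ i ≫ p = f

variable {C : Type u} [Category.{v} C]

/-- A morphism `f : X ⟶ Y` is an h-cofibration if cobase change along `f` preserves
weak equivalences: for every `g : X ⟶ A`, every weak equivalence `w : A ⟶ B`, and
pushouts `P = Y ⊔_X A` (of `g` along `f`) and `Q = Y ⊔_X B` (of `g ≫ w` along `f`),
the induced map `w' : P ⟶ Q` is a weak equivalence. -/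
def HCof (M : ModelStruct C) {X Y : C} (f : X ⟶ Y) : Prop :=
  ∀ ⦃A B P Q : C⦄ (g : X ⟶ A) (w : A ⟶ B)
    (a : A ⟶ P) (y : Y ⟶ P) (b : B ⟶ Q) (y' : Y ⟶ Q) (w' : P ⟶ Q),
    M.W w → IsPushout g f a y → IsPushout (g ≫ w) f b y' →
    a ≫ w' = w ≫ b → y ≫ w' = y' → M.W w'

/-- A model category is left proper if the pushout of a weak equivalence along a
cofibration is again a weak equivalence. -/
def LeftProper (M : ModelStruct C) : Prop :=
  ∀ ⦃X Y Z P : C⦄ (i : X ⟶ Y) (w : X ⟶ Z) (h : Z ⟶ P) (k : Y ⟶ P),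
    M.Cof i → M.W w → IsPushout w i h k → M.W k

open MonoidalCategory

/-- A monoidal model category: a model structure together with a monoidal structure
satisfying the pushout–product axiom: for cofibrations `f : X ⟶ Y` and
`g : X' ⟶ Y'`, the induced map `(Y ⊗ X') ⊔_{X ⊗ X'} (X ⊗ Y') ⟶ Y ⊗ Y'` is a
cofibration, and a trivial cofibration if `f` or `g` is a weak equivalence. -/
structure MonoidalModel (C : Type u) [Category.{v} C] [MonoidalCategory C] extends
    ModelStruct C where
  pushout_product :
    ∀ {X Y X' Y' P : C} (f : X ⟶ Y) (g : X' ⟶ Y')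
      (inl : Y ⊗ X' ⟶ P) (inr : X ⊗ Y' ⟶ P) (h : P ⟶ Y ⊗ Y'),
      Cof f → Cof g →
      IsPushout (f ▷ X') (X ◁ g) inl inr →
      inl ≫ h = Y ◁ g → inr ≫ h = f ▷ Y' →
      Cof h ∧ ((W f ∨ W g) → W h)

variable [MonoidalCategory C]

/-- A monoidal model category is h-monoidal if for each cofibration
(resp. trivial cofibration) `f` and each object `Z` the morphism `f ▷ Z`
(that is, `f ⊗ 𝟙 Z`) is an h-cofibration (resp. a trivial h-cofibration). -/
def HMonoidal (M : MonoidalModel C) : Prop :=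
  (∀ {X Y : C} (f : X ⟶ Y) (Z : C), M.Cof f → HCof M.toModelStruct (f ▷ Z)) ∧
  (∀ {X Y : C} (f : X ⟶ Y) (Z : C), M.Cof f → M.W f →
    HCof M.toModelStruct (f ▷ Z) ∧ M.W (f ▷ Z))

/-- The inclusion of the subset `{α | α < β}` of a preorder, as a functor. -/
def iioFunctor {Λ : Type v} [Preorder Λ] (β : Λ) : Set.Iio β ⥤ Λ :=
  Monotone.functor (f := fun x : Set.Iio β => (x : Λ)) (fun _ _ h => h)

/-- The cocone on the restriction of `X : Λ ⥤ C` to `{α | α < β}` with apex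
`X.obj β`. -/
def iioCocone {Λ : Type v} [Preorder Λ] (β : Λ) (X : Λ ⥤ C) :
    Cocone (iioFunctor β ⋙ X) where
  pt := X.obj β
  ι :=
    { app := fun α => X.map (homOfLE α.2.le)
      naturality := by
        intro a b f
        dsimp [iioFunctor]
        rw [Category.comp_id, ← X.map_comp]
        exact congrArg X.map (Subsingleton.elim _ _) }

/-- A class `K` of morphisms is closed under transfinite composition. -/
def ClosedUnderTransfiniteComposition (K : MorphismProperty C) : Prop :=
  ∀ (Λ : Type v) [LinearOrder Λ] [OrderBot Λ] [SuccOrder Λ] [WellFoundedLT Λ]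
    (X : Λ ⥤ C) [HasColimit X],
    (∀ β : Λ, Order.IsSuccLimit β → Nonempty (IsColimit (iioCocone β X))) →
    (∀ α : Λ, ¬IsMax α → K (X.map (homOfLE (Order.le_succ α)))) →
    K (colimit.ι X ⊥)

/-- `K` contains the tensor products `f ▷ Z = f ⊗ 𝟙 Z` for all `f` in `S` and all
objects `Z`, and is closed under cobase change, retracts and transfinite
composition. -/
def MonSaturatedContaining (S K : MorphismProperty C) : Prop :=
  (∀ {X Y : C} (f : X ⟶ Y), S f → ∀ Z : C, K (f ▷ Z)) ∧
  (∀ {X Y A P : C} (f : X ⟶ Y) (g : X ⟶ A) (inl : Y ⟶ P) (inr : A ⟶ P),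
    IsPushout f g inl inr → K f → K inr) ∧
  (∀ {X Y X' Y' : C} (f : X ⟶ Y) (f' : X' ⟶ Y') (i : X ⟶ X') (r : X' ⟶ X)
    (j : Y ⟶ Y') (s : Y' ⟶ Y), i ≫ r = 𝟙 X → j ≫ s = 𝟙 Y →
    i ≫ f' = f ≫ j → r ≫ f = f' ≫ s → K f' → K f) ∧
  ClosedUnderTransfiniteComposition K

/-- The monoidal saturation of a class `S` of morphisms: the smallest class of
morphisms containing `f ⊗ 𝟙 Z` for every `f ∈ S` and every object `Z`, and closed
under cobase change, transfinite composition and retracts. -/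
def monSaturation (S : MorphismProperty C) : MorphismProperty C :=
  fun _ _ f => ∀ K : MorphismProperty C, MonSaturatedContaining S K → K f

/-- A weak equivalence is couniversal if every cobase change of it is again a weak
equivalence. -/
def Couniversal (M : ModelStruct C) {X Y : C} (f : X ⟶ Y) : Prop :=
  M.W f ∧ ∀ ⦃A P : C⦄ (g : X ⟶ A) (inl : Y ⟶ P) (inr : A ⟶ P),
    IsPushout f g inl inr → M.W inr

/-- The class `W` is `K`-perfect if it is closed under filtered colimits along
morphisms of `K`. -/
def KPerfect (W K : MorphismProperty C) : Prop :=
  ∀ (J : Type v) [Category.{v} J] [IsFiltered J] (F G : J ⥤ C) (η : F ⟶ G)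
    [HasColimit F] [HasColimit G],
    (∀ j : J, W (η.app j)) →
    (∀ {i j : J} (f : i ⟶ j), K (F.map f)) →
    (∀ {i j : J} (f : i ⟶ j), K (G.map f)) →
    W (colimMap η)

section Aux

variable {C : Type u} [Category.{v} C]

lemma mapLE_comp {P : Type*} [Preorder P] (X : P ⥤ C) {a b c : P} (h₁ : a ≤ b) (h₂ : b ≤ c)
    (h₃ : a ≤ c) : X.map (homOfLE h₁) ≫ X.map (homOfLE h₂) = X.map (homOfLE h₃) := by
  rw [← X.map_comp]
  exact congrArg X.map (Subsingleton.elim _ _)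

lemma mapLE_self {P : Type*} [Preorder P] (X : P ⥤ C) {a : P} (h : a ≤ a) :
    X.map (homOfLE h) = 𝟙 _ := by
  have : homOfLE h = 𝟙 a := Subsingleton.elim _ _
  rw [this, X.map_id]

lemma isIso_mapLE {P : Type*} [Preorder P] (X : P ⥤ C) {a b : P} (h : a ≤ b) (h' : b ≤ a) :
    IsIso (X.map (homOfLE h)) :=
  ⟨X.map (homOfLE h'), by rw [mapLE_comp X h h' le_rfl, mapLE_self],
    by rw [mapLE_comp X h' h le_rfl, mapLE_self]⟩

lemma ModelStruct.cof_of_isIso (M : ModelStruct C) {A B : C} (f : A ⟶ B) [IsIso f] : M.Cof f := by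
  obtain ⟨Z, ifac, p, hi, hp, hw, hfac⟩ := M.factorization_cof_trivFib f
  exact M.Cof_retract f ifac (𝟙 A) (𝟙 A) (inv f ≫ ifac) p (by simp) (by simp [hfac])
    (by simp) (by simp [hfac]) hi

lemma isIso_inr_of_isPushout {Z X Y P : C} {f : Z ⟶ X} {g : Z ⟶ Y} {inl : X ⟶ P} {inr : Y ⟶ P}
    (hpo : IsPushout f g inl inr) [IsIso f] : IsIso inr := by
  refine ⟨⟨hpo.desc (inv f ≫ g) (𝟙 Y) (by simp), hpo.inr_desc _ _ _, ?_⟩⟩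
  apply hpo.hom_ext
  · rw [← Category.assoc, hpo.inl_desc, Category.comp_id, Category.assoc, ← hpo.w,
      IsIso.inv_hom_id_assoc]
  · rw [← Category.assoc, hpo.inr_desc, Category.id_comp, Category.comp_id]

lemma couniv_of_isIso (M : ModelStruct C) {A B : C} (f : A ⟶ B) [IsIso f] :
    Couniversal M f := by
  refine ⟨M.W_of_isIso f inferInstance, ?_⟩
  intro A' P g inl inr hpo
  haveI := isIso_inr_of_isPushout hpo
  exact M.W_of_isIso inr inferInstance

lemma couniv_cobase {M : ModelStruct C} {X Y A P : C} {f : X ⟶ Y} (hf : Couniversal M f)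
    {g : X ⟶ A} {inl : Y ⟶ P} {inr : A ⟶ P} (hpo : IsPushout f g inl inr) :
    Couniversal M inr := by
  refine ⟨hf.2 g inl inr hpo, ?_⟩
  intro A' Q g' inl' inr' hpo2
  exact hf.2 (g ≫ g') (inl ≫ inl') inr' (hpo.paste_vert hpo2)

lemma couniv_retract [HasPushouts C] {M : ModelStruct C} {X Y X' Y' : C}
    (f : X ⟶ Y) (f' : X' ⟶ Y') (i : X ⟶ X') (r : X' ⟶ X) (j : Y ⟶ Y') (s : Y' ⟶ Y)
    (hir : i ≫ r = 𝟙 X) (hjs : j ≫ s = 𝟙 Y) (h1 : i ≫ f' = f ≫ j) (h2 : r ≫ f = f' ≫ s)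
    (hf' : Couniversal M f') : Couniversal M f := by
  refine ⟨M.W_retract f f' i r j s hir hjs h1 h2 hf'.1, ?_⟩
  intro A P g inl inr hpo
  have hq : IsPushout f' (r ≫ g) (pushout.inl f' (r ≫ g)) (pushout.inr f' (r ≫ g)) :=
    IsPushout.of_hasPushout _ _
  have w1 : f ≫ j ≫ pushout.inl f' (r ≫ g) = g ≫ pushout.inr f' (r ≫ g) := by
    rw [← Category.assoc, ← h1, Category.assoc, pushout.condition, ← Category.assoc,
      ← Category.assoc, hir, Category.id_comp]
  have w2 : f' ≫ s ≫ inl = (r ≫ g) ≫ inr := by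
    rw [← Category.assoc, ← h2, Category.assoc, hpo.w, Category.assoc]
  set u := hpo.desc (j ≫ pushout.inl f' (r ≫ g)) (pushout.inr f' (r ≫ g)) w1 with hu
  set v := hq.desc (s ≫ inl) inr w2 with hv
  have huv : u ≫ v = 𝟙 P := by
    apply hpo.hom_ext
    · rw [← Category.assoc, hpo.inl_desc, Category.assoc, hq.inl_desc, ← Category.assoc,
        hjs, Category.id_comp, Category.comp_id]
    · rw [← Category.assoc, hpo.inr_desc, hq.inr_desc, Category.comp_id]
  exact M.W_retract inr (pushout.inr f' (r ≫ g)) (𝟙 A) (𝟙 A) u v (by simp) huv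
    (by rw [Category.id_comp, hpo.inr_desc]) (by rw [Category.id_comp, hq.inr_desc])
    (hf'.2 _ _ _ hq)

lemma monSat_sat (S : MorphismProperty C) [MonoidalCategory C] :
    MonSaturatedContaining S (monSaturation S) :=
  ⟨fun f hf Z K hK => hK.1 f hf Z,
   fun f g inl inr hpo hf K hK => hK.2.1 f g inl inr hpo (hf K hK),
   fun f f' i r j s e1 e2 e3 e4 hf' K hK => hK.2.2.1 f f' i r j s e1 e2 e3 e4 (hf' K hK),
   fun Λ _ _ _ _ X _ hlim hsucc K hK => hK.2.2.2 Λ X hlim (fun α hα => hsucc α hα K hK)⟩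

lemma monSat_mono [MonoidalCategory C] {S S' : MorphismProperty C}
    (h : ∀ {X Y : C} (f : X ⟶ Y), S f → S' f)
    {A B : C} {f : A ⟶ B} (hf : monSaturation S f) : monSaturation S' f := by
  intro K hK
  exact hf K ⟨fun g hg Z => hK.1 g (h g hg) Z, hK.2⟩

lemma MonSaturatedContaining.conj [MonoidalCategory C] {S K : MorphismProperty C}
    (hK : MonSaturatedContaining S K)
    {A B A' B' : C} {k : A' ⟶ B'} {u : A ⟶ A'} {v : B' ⟶ B} [IsIso u] [IsIso v]
    (hk : K k) : K (u ≫ k ≫ v) :=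
  hK.2.2.1 _ k u (inv u) (inv v) v (by simp) (by simp) (by simp) (by simp) hk

lemma MonSaturatedContaining.iso [MonoidalCategory C] {S K : MorphismProperty C}
    (hK : MonSaturatedContaining S K)
    (hS : ∀ X : C, S (𝟙 X)) {A B : C} (f : A ⟶ B) [IsIso f] : K f := by
  have h1 : K ((𝟙 A) ▷ (𝟙_ C)) := hK.1 _ (hS A) _
  rw [MonoidalCategory.id_whiskerRight] at h1
  have := hK.conj (u := (ρ_ A).inv) (v := (ρ_ A).hom ≫ f) h1
  simpa using this

end Aux
section Engine

variable {C : Type u} [Category.{v} C]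
variable {Λ : Type v} [LinearOrder Λ] [OrderBot Λ] [SuccOrder Λ] [WellFoundedLT Λ]

/-- The diagram `γ ↦ X (a ⊔ (γ ⊓ b))`. -/
def clampFunctor (X : Λ ⥤ C) (a b : Λ) : Λ ⥤ C :=
  Monotone.functor (f := fun γ : Λ => a ⊔ (γ ⊓ b))
    (fun _ _ h => sup_le_sup_left (inf_le_inf_right _ h) _) ⋙ X

variable (X : Λ ⥤ C) (a b : Λ)

/-- The cocone on the clamped diagram with apex `X b`. -/
def clampCocone (hab : a ≤ b) : Cocone (clampFunctor X a b) where
  pt := X.obj b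
  ι :=
    { app := fun γ => X.map (homOfLE (sup_le hab inf_le_right))
      naturality := fun γ γ' f => by
        simp only [Functor.const_obj_map, Category.comp_id]
        exact (mapLE_comp X (sup_le_sup_left (inf_le_inf_right _ (leOfHom f)) _)
          (sup_le hab inf_le_right) (sup_le hab inf_le_right)).trans (Category.comp_id _).symm }

/-- The cocone `clampCocone` is colimiting. -/
def clampCoconeIsColimit (hab : a ≤ b) : IsColimit (clampCocone X a b hab) where
  desc c := X.map (homOfLE (le_sup_of_le_right (le_inf le_rfl le_rfl) : b ≤ a ⊔ (b ⊓ b))) ≫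
    c.ι.app b
  fac c γ := by
    have e1 : X.map (homOfLE (sup_le_sup_left (inf_le_inf_right _ (le_sup_left : γ ≤ γ ⊔ b)) a)) ≫
        c.ι.app (γ ⊔ b) = c.ι.app γ := c.w (homOfLE le_sup_left)
    have e2 : X.map (homOfLE (sup_le_sup_left (inf_le_inf_right _ (le_sup_right : b ≤ γ ⊔ b)) a)) ≫
        c.ι.app (γ ⊔ b) = c.ι.app b := c.w (homOfLE le_sup_right)
    show X.map (homOfLE (sup_le hab inf_le_right)) ≫ _ ≫ c.ι.app b = c.ι.app γ
    erw [← e2, ← e1, ← Category.assoc, ← Category.assoc]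
    congr 1
    erw [mapLE_comp X _ _ ((sup_le hab inf_le_right).trans
      (le_sup_of_le_right (le_inf le_rfl le_rfl)))]
    exact mapLE_comp X _ _ (((sup_le hab inf_le_right).trans
      (le_sup_of_le_right (le_inf le_rfl le_rfl))).trans
        (sup_le_sup_left (inf_le_inf_right _ le_sup_right) a))
  uniq c m hm := by
    have e : X.map (homOfLE (sup_le hab inf_le_right : a ⊔ (b ⊓ b) ≤ b)) ≫ m = c.ι.app b := hm b
    erw [← e, ← Category.assoc,
      mapLE_comp X _ _ (le_refl b), mapLE_self]
    exact (Category.id_comp m).symm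

end Engine
section Engine2

variable {C : Type u} [Category.{v} C]
variable {Λ : Type v} [LinearOrder Λ]

/-- A morphism in `Set.Iio β'` from an inequality of the underlying elements. -/
def iioHom {β' : Λ} (x y : Set.Iio β') (h : (x : Λ) ≤ (y : Λ)) : x ⟶ y :=
  homOfLE (Subtype.coe_le_coe.mp h)

variable (X : Λ ⥤ C) (a b : Λ)

/-- Limit-stage colimit for the clamped diagram: eventually constant case. -/
def clampIioIsColimitConst {β' : Λ} (δ : Set.Iio β')
    (h : a ⊔ (β' ⊓ b) ≤ a ⊔ ((δ : Λ) ⊓ b)) :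
    IsColimit (iioCocone β' (clampFunctor X a b)) where
  desc c := X.map (homOfLE h) ≫ c.ι.app δ
  fac c γ := by
    have hμ : max (γ : Λ) (δ : Λ) < β' := max_lt γ.2 δ.2
    have e1 : X.map (homOfLE (sup_le_sup_left (inf_le_inf_right b
        (le_max_left (γ : Λ) (δ : Λ))) a)) ≫ c.ι.app ⟨_, hμ⟩ = c.ι.app γ :=
      c.w (iioHom γ ⟨_, hμ⟩ (le_max_left _ _))
    have e2 : X.map (homOfLE (sup_le_sup_left (inf_le_inf_right b
        (le_max_right (γ : Λ) (δ : Λ))) a)) ≫ c.ι.app ⟨_, hμ⟩ = c.ι.app δ :=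
      c.w (iioHom δ ⟨_, hμ⟩ (le_max_right _ _))
    show X.map (homOfLE (sup_le_sup_left (inf_le_inf_right b γ.2.le) a)) ≫
      X.map (homOfLE h) ≫ c.ι.app δ = c.ι.app γ
    erw [← e2, ← e1, ← Category.assoc, ← Category.assoc]
    congr 1
    rw [mapLE_comp X _ _ ((sup_le_sup_left (inf_le_inf_right b γ.2.le) a).trans h)]
    exact mapLE_comp X _ _ _
  uniq c m hm := by
    have e : X.map (homOfLE (sup_le_sup_left (inf_le_inf_right b δ.2.le) a)) ≫ m =
        c.ι.app δ := hm δ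
    erw [← e, ← Category.assoc, mapLE_comp X _ _ (le_refl (a ⊔ (β' ⊓ b))), mapLE_self]
    exact (Category.id_comp m).symm

/-- Auxiliary cocone for the middle case. -/
def clampMidCocone {β' : Λ} (hb : β' ≤ b) (c : Cocone (iioFunctor β' ⋙ clampFunctor X a b)) :
    Cocone (iioFunctor β' ⋙ X) where
  pt := c.pt
  ι :=
    { app := fun γ => X.map (homOfLE (le_sup_of_le_right
        (le_inf le_rfl (γ.2.le.trans hb)) : (γ : Λ) ≤ a ⊔ ((γ : Λ) ⊓ b))) ≫ c.ι.app γ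
      naturality := fun γ γ' f => by
        dsimp only [Functor.const_obj_map]
        have e : X.map (homOfLE (sup_le_sup_left (inf_le_inf_right b
            (leOfHom f : (γ : Λ) ≤ (γ' : Λ))) a)) ≫ c.ι.app γ' = c.ι.app γ := c.w f
        have l1 : X.map (homOfLE (leOfHom f : (γ : Λ) ≤ (γ' : Λ))) ≫
            X.map (homOfLE (le_sup_of_le_right (le_inf le_rfl (γ'.2.le.trans hb)) :
              (γ' : Λ) ≤ a ⊔ ((γ' : Λ) ⊓ b))) =
            X.map (homOfLE ((leOfHom f : (γ : Λ) ≤ (γ' : Λ)).trans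
              (le_sup_of_le_right (le_inf le_rfl (γ'.2.le.trans hb))))) :=
          mapLE_comp X _ _ _
        have l2 : X.map (homOfLE (le_sup_of_le_right
              (le_inf le_rfl (γ.2.le.trans hb)) : (γ : Λ) ≤ a ⊔ ((γ : Λ) ⊓ b))) ≫
            X.map (homOfLE (sup_le_sup_left (inf_le_inf_right b
              (leOfHom f : (γ : Λ) ≤ (γ' : Λ))) a)) =
            X.map (homOfLE ((leOfHom f : (γ : Λ) ≤ (γ' : Λ)).trans
              (le_sup_of_le_right (le_inf le_rfl (γ'.2.le.trans hb))))) :=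
          mapLE_comp X _ _ _
        calc X.map (homOfLE (leOfHom f : (γ : Λ) ≤ (γ' : Λ))) ≫
              X.map (homOfLE (le_sup_of_le_right (le_inf le_rfl (γ'.2.le.trans hb)) :
                (γ' : Λ) ≤ a ⊔ ((γ' : Λ) ⊓ b))) ≫ c.ι.app γ'
            = (X.map (homOfLE ((leOfHom f : (γ : Λ) ≤ (γ' : Λ)).trans
                (le_sup_of_le_right (le_inf le_rfl (γ'.2.le.trans hb)))))) ≫ c.ι.app γ' := by
              erw [← Category.assoc]; exact congrArg (· ≫ c.ι.app γ') l1
          _ = X.map (homOfLE (le_sup_of_le_right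
                (le_inf le_rfl (γ.2.le.trans hb)) : (γ : Λ) ≤ a ⊔ ((γ : Λ) ⊓ b))) ≫
              X.map (homOfLE (sup_le_sup_left (inf_le_inf_right b
                (leOfHom f : (γ : Λ) ≤ (γ' : Λ))) a)) ≫ c.ι.app γ' := by
              erw [← Category.assoc, l2]
          _ = X.map (homOfLE (le_sup_of_le_right
                (le_inf le_rfl (γ.2.le.trans hb)) : (γ : Λ) ≤ a ⊔ ((γ : Λ) ⊓ b))) ≫
              c.ι.app γ := by rw [e]
          _ = (X.map (homOfLE (le_sup_of_le_right
                (le_inf le_rfl (γ.2.le.trans hb)) : (γ : Λ) ≤ a ⊔ ((γ : Λ) ⊓ b))) ≫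
              c.ι.app γ) ≫ 𝟙 c.pt := (Category.comp_id _).symm }

/-- Limit-stage colimit for the clamped diagram: middle case `a < β' ≤ b`. -/
def clampIioIsColimitMid {β' : Λ} (ha : a < β') (hb : β' ≤ b)
    (hc : IsColimit (iioCocone β' X)) :
    IsColimit (iioCocone β' (clampFunctor X a b)) where
  desc c := X.map (homOfLE (sup_le ha.le inf_le_left : a ⊔ (β' ⊓ b) ≤ β')) ≫
    hc.desc (clampMidCocone X a b hb c)
  fac c γ := by
    have hcl : a ⊔ ((γ : Λ) ⊓ b) < β' := sup_lt_iff.mpr ⟨ha, lt_of_le_of_lt inf_le_left γ.2⟩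
    have hfac : X.map (homOfLE hcl.le) ≫ hc.desc (clampMidCocone X a b hb c) =
        X.map (homOfLE (le_sup_of_le_right (le_inf le_rfl (hcl.le.trans hb)) :
          a ⊔ ((γ : Λ) ⊓ b) ≤ a ⊔ ((a ⊔ ((γ : Λ) ⊓ b)) ⊓ b))) ≫
          c.ι.app ⟨a ⊔ ((γ : Λ) ⊓ b), hcl⟩ :=
      hc.fac (clampMidCocone X a b hb c) ⟨_, hcl⟩
    have e3 : X.map (homOfLE (sup_le_sup_left (inf_le_inf_right b (le_sup_of_le_right
        (le_inf le_rfl (γ.2.le.trans hb)) : (γ : Λ) ≤ a ⊔ ((γ : Λ) ⊓ b))) a)) ≫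
        c.ι.app ⟨a ⊔ ((γ : Λ) ⊓ b), hcl⟩ = c.ι.app γ :=
      c.w (iioHom γ ⟨_, hcl⟩ (le_sup_of_le_right (le_inf le_rfl (γ.2.le.trans hb))))
    show X.map (homOfLE (sup_le_sup_left (inf_le_inf_right b γ.2.le) a)) ≫
      X.map (homOfLE (sup_le ha.le inf_le_left)) ≫ hc.desc (clampMidCocone X a b hb c) =
      c.ι.app γ
    erw [← Category.assoc, mapLE_comp X _ _ hcl.le, hfac]
    exact e3
  uniq c m hm := by
    have key : hc.desc (clampMidCocone X a b hb c) =
        X.map (homOfLE (le_sup_of_le_right (le_inf le_rfl hb) : β' ≤ a ⊔ (β' ⊓ b))) ≫ m := by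
      refine (hc.uniq (clampMidCocone X a b hb c) _ ?_).symm
      intro γ
      have e : X.map (homOfLE (sup_le_sup_left (inf_le_inf_right b γ.2.le) a)) ≫ m =
          c.ι.app γ := hm γ
      have l1 : X.map (homOfLE γ.2.le) ≫
          X.map (homOfLE (le_sup_of_le_right (le_inf le_rfl hb) : β' ≤ a ⊔ (β' ⊓ b))) =
          X.map (homOfLE (γ.2.le.trans (le_sup_of_le_right (le_inf le_rfl hb)))) :=
        mapLE_comp X _ _ _
      have l2 : X.map (homOfLE (le_sup_of_le_right
            (le_inf le_rfl (γ.2.le.trans hb)) : (γ : Λ) ≤ a ⊔ ((γ : Λ) ⊓ b))) ≫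
          X.map (homOfLE (sup_le_sup_left (inf_le_inf_right b γ.2.le) a)) =
          X.map (homOfLE (γ.2.le.trans (le_sup_of_le_right (le_inf le_rfl hb)))) :=
        mapLE_comp X _ _ _
      calc X.map (homOfLE (γ.2.le : (γ : Λ) ≤ β')) ≫
            X.map (homOfLE (le_sup_of_le_right (le_inf le_rfl hb) : β' ≤ a ⊔ (β' ⊓ b))) ≫ m
          = X.map (homOfLE (γ.2.le.trans (le_sup_of_le_right (le_inf le_rfl hb)))) ≫ m := by
            erw [← Category.assoc]; exact congrArg (· ≫ m) l1
        _ = X.map (homOfLE (le_sup_of_le_right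
              (le_inf le_rfl (γ.2.le.trans hb)) : (γ : Λ) ≤ a ⊔ ((γ : Λ) ⊓ b))) ≫
            X.map (homOfLE (sup_le_sup_left (inf_le_inf_right b γ.2.le) a)) ≫ m := by
            erw [← Category.assoc, l2]
        _ = X.map (homOfLE (le_sup_of_le_right
              (le_inf le_rfl (γ.2.le.trans hb)) : (γ : Λ) ≤ a ⊔ ((γ : Λ) ⊓ b))) ≫ c.ι.app γ := by
            rw [e]
    erw [key, ← Category.assoc, mapLE_comp X _ _ (le_refl (a ⊔ (β' ⊓ b))), mapLE_self]
    exact (Category.id_comp m).symm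

/-- Limit-stage colimits for the clamped diagram. -/
lemma clampIioIsColimit {β' : Λ} (hβ : Order.IsSuccLimit β') (hab : a ≤ b)
    (hc : IsColimit (iioCocone β' X)) :
    Nonempty (IsColimit (iioCocone β' (clampFunctor X a b))) := by
  rcases le_or_gt β' a with h1 | h1
  · obtain ⟨δ, hδ⟩ := not_isMin_iff.mp hβ.not_isMin
    exact ⟨clampIioIsColimitConst X a b ⟨δ, hδ⟩
      (sup_le le_sup_left (le_sup_of_le_left (inf_le_left.trans h1)))⟩
  · rcases le_or_gt β' b with h2 | h2
    · exact ⟨clampIioIsColimitMid X a b h1 h2 hc⟩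
    · exact ⟨clampIioIsColimitConst X a b ⟨b, h2⟩
        (sup_le_sup_left (inf_le_right.trans (le_inf le_rfl le_rfl)) a)⟩

end Engine2
section EngineM

variable {C : Type u} [Category.{v} C] [MonoidalCategory C] [HasColimitsOfSize.{v, v} C]
variable (M : MonoidalModel C)

lemma monSat_isos {A B : C} (f : A ⟶ B) [IsIso f] : monSaturation M.Cof f :=
  (monSat_sat M.Cof).iso (fun X => M.cof_of_isIso (𝟙 X)) f

lemma monSat_conj {A B A' B' : C} {k : A' ⟶ B'} (u : A ⟶ A') (v : B' ⟶ B) [IsIso u] [IsIso v]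
    (hk : monSaturation M.Cof k) : monSaturation M.Cof (u ≫ k ≫ v) :=
  (monSat_sat M.Cof).conj hk

variable {Λ : Type v} [LinearOrder Λ] [OrderBot Λ] [SuccOrder Λ] [WellFoundedLT Λ]
variable (X : Λ ⥤ C)

lemma clamp_step
    (hsucc : ∀ α : Λ, ¬IsMax α → monSaturation M.Cof (X.map (homOfLE (Order.le_succ α))))
    (a b : Λ) (α : Λ) (hα : ¬IsMax α) :
    monSaturation M.Cof ((clampFunctor X a b).map (homOfLE (Order.le_succ α))) := by
  rcases lt_or_ge α a with h1 | h1
  · have h2 : Order.succ α ≤ a := Order.succ_le_of_lt h1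
    haveI : IsIso ((clampFunctor X a b).map (homOfLE (Order.le_succ α))) :=
      isIso_mapLE X _ (sup_le le_sup_left (le_sup_of_le_left (inf_le_left.trans h2)))
    exact monSat_isos M _
  · rcases lt_or_ge α b with h2 | h2
    · have h3 : Order.succ α ≤ b := Order.succ_le_of_lt h2
      haveI : IsIso (X.map (homOfLE (sup_le h1 inf_le_left : a ⊔ (α ⊓ b) ≤ α))) :=
        isIso_mapLE X _ (le_sup_of_le_right (le_inf le_rfl h2.le))
      haveI : IsIso (X.map (homOfLE (le_sup_of_le_right (le_inf le_rfl h3) :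
          Order.succ α ≤ a ⊔ (Order.succ α ⊓ b)))) :=
        isIso_mapLE X _ (sup_le (h1.trans (Order.le_succ α)) inf_le_left)
      have heq : (clampFunctor X a b).map (homOfLE (Order.le_succ α)) =
          X.map (homOfLE (sup_le h1 inf_le_left : a ⊔ (α ⊓ b) ≤ α)) ≫
          X.map (homOfLE (Order.le_succ α)) ≫
          X.map (homOfLE (le_sup_of_le_right (le_inf le_rfl h3) :
            Order.succ α ≤ a ⊔ (Order.succ α ⊓ b))) := by
        rw [← Category.assoc,
          mapLE_comp X _ _ ((sup_le h1 inf_le_left).trans (Order.le_succ α)),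
          mapLE_comp X _ _ (((sup_le h1 inf_le_left).trans (Order.le_succ α)).trans
            (le_sup_of_le_right (le_inf le_rfl h3)))]
        rfl
      rw [heq]
      exact monSat_conj M (X.map (homOfLE (sup_le h1 inf_le_left : a ⊔ (α ⊓ b) ≤ α)))
          (X.map (homOfLE (le_sup_of_le_right (le_inf le_rfl h3) :
            Order.succ α ≤ a ⊔ (Order.succ α ⊓ b)))) (hsucc α hα)
    · haveI : IsIso ((clampFunctor X a b).map (homOfLE (Order.le_succ α))) :=
        isIso_mapLE X _ (sup_le le_sup_left
          (le_sup_of_le_right (inf_le_right.trans (le_inf h2 le_rfl))))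
      exact monSat_isos M _

lemma engine_monSat
    (hlim : ∀ β : Λ, Order.IsSuccLimit β → Nonempty (IsColimit (iioCocone β X)))
    (hsucc : ∀ α : Λ, ¬IsMax α → monSaturation M.Cof (X.map (homOfLE (Order.le_succ α))))
    {a b : Λ} (hab : a ≤ b) : monSaturation M.Cof (X.map (homOfLE hab)) := by
  have hlimY : ∀ β : Λ, Order.IsSuccLimit β →
      Nonempty (IsColimit (iioCocone β (clampFunctor X a b))) := by
    intro β hβ
    obtain ⟨hc⟩ := hlim β hβ
    exact clampIioIsColimit X a b hβ hab hc
  have hKι : monSaturation M.Cof (colimit.ι (clampFunctor X a b) ⊥) :=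
    (monSat_sat M.Cof).2.2.2 Λ (clampFunctor X a b) hlimY
      (fun α hα => clamp_step M X hsucc a b α hα)
  have hcolim := clampCoconeIsColimit X a b hab
  have hι : colimit.ι (clampFunctor X a b) ⊥ ≫
      (IsColimit.coconePointUniqueUpToIso (colimit.isColimit (clampFunctor X a b)) hcolim).hom =
      X.map (homOfLE (sup_le hab inf_le_right : a ⊔ ((⊥ : Λ) ⊓ b) ≤ b)) :=
    IsColimit.comp_coconePointUniqueUpToIso_hom _ _ ⊥
  have heq : X.map (homOfLE hab) =
      X.map (homOfLE (le_sup_left : a ≤ a ⊔ ((⊥ : Λ) ⊓ b))) ≫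
      colimit.ι (clampFunctor X a b) ⊥ ≫
      (IsColimit.coconePointUniqueUpToIso (colimit.isColimit (clampFunctor X a b)) hcolim).hom
      := by
    erw [hι, mapLE_comp X _ _ hab]
  haveI : IsIso (X.map (homOfLE (le_sup_left : a ≤ a ⊔ ((⊥ : Λ) ⊓ b)))) :=
    isIso_mapLE X _ (sup_le le_rfl (inf_le_left.trans bot_le))
  rw [heq]
  exact monSat_conj M (X.map (homOfLE (le_sup_left : a ≤ a ⊔ ((⊥ : Λ) ⊓ b))))
    (IsColimit.coconePointUniqueUpToIso (colimit.isColimit (clampFunctor X a b)) hcolim).hom hKι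

end EngineM
section EngineW

variable {C : Type u} [Category.{v} C]

lemma isIso_ι_const {J : Type v} [Preorder J] [IsDirected J (· ≤ ·)] (A : C)
    [HasColimit ((Functor.const J).obj A)] (j₀ : J) :
    IsIso (colimit.ι ((Functor.const J).obj A) j₀) := by
  have key : ∀ j : J, colimit.ι ((Functor.const J).obj A) j =
      colimit.ι ((Functor.const J).obj A) j₀ := by
    intro j
    obtain ⟨k, hj, hj₀⟩ := exists_ge_ge j j₀
    have e1 : colimit.ι ((Functor.const J).obj A) j = colimit.ι ((Functor.const J).obj A) k :=
      (colimit.w _ (homOfLE hj)).symm.trans (Category.id_comp _)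
    have e2 : colimit.ι ((Functor.const J).obj A) j₀ = colimit.ι ((Functor.const J).obj A) k :=
      (colimit.w _ (homOfLE hj₀)).symm.trans (Category.id_comp _)
    rw [e1, e2]
  refine ⟨⟨colimit.desc _ ⟨A, { app := fun _ => 𝟙 A, naturality := fun _ _ _ => rfl }⟩, ?_, ?_⟩⟩
  · exact colimit.ι_desc _ _
  · apply colimit.hom_ext
    intro j
    rw [← Category.assoc, colimit.ι_desc]
    show 𝟙 A ≫ colimit.ι ((Functor.const J).obj A) j₀ = colimit.ι ((Functor.const J).obj A) j ≫ 𝟙 _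
    rw [Category.id_comp, Category.comp_id, key j]

variable {Λ : Type v} [LinearOrder Λ] [OrderBot Λ] [SuccOrder Λ] [WellFoundedLT Λ]
variable (X : Λ ⥤ C)

/-- The natural transformation from the constant diagram at `X ⊥` to the restriction of `X`. -/
def constToIio (b : Λ) : (Functor.const (Set.Iio b)).obj (X.obj ⊥) ⟶ iioFunctor b ⋙ X where
  app γ := X.map (homOfLE (bot_le : ⊥ ≤ (γ : Λ)))
  naturality γ γ' f := (Category.id_comp _).trans
    (mapLE_comp X bot_le (leOfHom f : (γ : Λ) ≤ (γ' : Λ)) bot_le).symm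

/-- The natural transformation from the constant diagram at `X ⊥` to `X`. -/
def constToAll : (Functor.const Λ).obj (X.obj ⊥) ⟶ X where
  app β := X.map (homOfLE (bot_le : ⊥ ≤ β))
  naturality β β' f := (Category.id_comp _).trans
    (mapLE_comp X bot_le (leOfHom f) bot_le).symm

variable [MonoidalCategory C] [HasColimitsOfSize.{v, v} C] (M : MonoidalModel C)

set_option maxHeartbeats 1600000 in
set_option synthInstance.maxHeartbeats 400000 in
lemma engine_W_bot (hperf : KPerfect M.W (monSaturation M.Cof))
    (hlim : ∀ β : Λ, Order.IsSuccLimit β → Nonempty (IsColimit (iioCocone β X)))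
    (hsucc : ∀ α : Λ, ¬IsMax α → monSaturation M.Cof (X.map (homOfLE (Order.le_succ α))) ∧
      M.W (X.map (homOfLE (Order.le_succ α)))) :
    ∀ b : Λ, M.W (X.map (homOfLE (bot_le : ⊥ ≤ b))) := by
  intro b
  induction b using WellFoundedLT.induction with
  | _ b IH =>
  rcases eq_or_ne b ⊥ with rfl | hb0
  · haveI : IsIso (X.map (homOfLE (bot_le : (⊥ : Λ) ≤ ⊥))) := isIso_mapLE X _ le_rfl
    exact M.W_of_isIso _ inferInstance
  by_cases hlimb : Order.IsSuccLimit b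
  · -- limit case
    haveI hne : Nonempty (Set.Iio b) := by
      obtain ⟨δ, hδ⟩ := not_isMin_iff.mp hlimb.not_isMin
      exact ⟨⟨δ, hδ⟩⟩
    obtain ⟨hc⟩ := hlim b hlimb
    have hW : M.W (colimMap (constToIio X b)) := by
      apply hperf (Set.Iio b) _ _ (constToIio X b)
      · intro γ; exact IH γ γ.2
      · intro i j f
        haveI : IsIso (((Functor.const (Set.Iio b)).obj (X.obj ⊥)).map f) :=
          ⟨⟨𝟙 (X.obj ⊥), Category.comp_id _, Category.id_comp _⟩⟩
        exact monSat_isos M _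
      · intro i j f
        exact engine_monSat M X hlim (fun α hα => (hsucc α hα).1)
          (leOfHom f : (i : Λ) ≤ (j : Λ))
    have hdesc : IsIso (colimit.desc (iioFunctor b ⋙ X) (iioCocone b X)) := by
      refine ⟨⟨hc.desc (colimit.cocone (iioFunctor b ⋙ X)), ?_, ?_⟩⟩
      · apply colimit.hom_ext
        intro γ
        rw [← Category.assoc, colimit.ι_desc, hc.fac, colimit.cocone_ι, Category.comp_id]
      · apply hc.hom_ext
        intro γ
        rw [← Category.assoc, hc.fac, colimit.cocone_ι, colimit.ι_desc]
        exact (Category.comp_id _).symm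
    obtain ⟨j₀⟩ := hne
    have heq : X.map (homOfLE (bot_le : ⊥ ≤ b)) =
        colimit.ι ((Functor.const (Set.Iio b)).obj (X.obj ⊥)) j₀ ≫
          colimMap (constToIio X b) ≫ colimit.desc (iioFunctor b ⋙ X) (iioCocone b X) := by
      rw [← Category.assoc, ι_colimMap, Category.assoc, colimit.ι_desc]
      exact (mapLE_comp X bot_le j₀.2.le bot_le).symm
    rw [heq]
    haveI := isIso_ι_const (X.obj ⊥) j₀
    exact M.W_comp _ _ (M.W_of_isIso _ inferInstance)
      (M.W_comp _ _ hW (M.W_of_isIso _ hdesc))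
  · -- successor case
    have h1 : ¬ Order.IsSuccPrelimit b := by
      intro h
      exact hlimb ⟨fun hm => hb0 hm.eq_bot, h⟩
    obtain ⟨γ, hγmax, hγ⟩ := Order.not_isSuccPrelimit_iff_succ_eq.mp h1
    subst hγ
    have hlt : γ < Order.succ γ := Order.lt_succ_of_not_isMax hγmax
    have heq : X.map (homOfLE (bot_le : ⊥ ≤ Order.succ γ)) =
        X.map (homOfLE (bot_le : ⊥ ≤ γ)) ≫ X.map (homOfLE (Order.le_succ γ)) :=
      (mapLE_comp X _ _ _).symm
    rw [heq]
    exact M.W_comp _ _ (IH γ hlt) (hsucc γ hγmax).2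

set_option maxHeartbeats 1600000 in
set_option synthInstance.maxHeartbeats 400000 in
lemma engine_W [HasColimit X] (hperf : KPerfect M.W (monSaturation M.Cof))
    (hlim : ∀ β : Λ, Order.IsSuccLimit β → Nonempty (IsColimit (iioCocone β X)))
    (hsucc : ∀ α : Λ, ¬IsMax α → monSaturation M.Cof (X.map (homOfLE (Order.le_succ α))) ∧
      M.W (X.map (homOfLE (Order.le_succ α)))) :
    M.W (colimit.ι X ⊥) := by
  haveI : Nonempty Λ := ⟨⊥⟩
  have hW : M.W (colimMap (constToAll X)) := by
    apply hperf Λ _ _ (constToAll X)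
    · intro β; exact engine_W_bot X M hperf hlim hsucc β
    · intro i j f
      haveI : IsIso (((Functor.const Λ).obj (X.obj ⊥)).map f) :=
        ⟨⟨𝟙 (X.obj ⊥), Category.comp_id _, Category.id_comp _⟩⟩
      exact monSat_isos M _
    · intro i j f
      exact engine_monSat M X hlim (fun α hα => (hsucc α hα).1) (leOfHom f)
  have heq : colimit.ι X ⊥ = colimit.ι ((Functor.const Λ).obj (X.obj ⊥)) ⊥ ≫
      colimMap (constToAll X) := by
    rw [ι_colimMap]
    rw [show (constToAll X).app ⊥ = 𝟙 (X.obj ⊥) from mapLE_self X bot_le]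
    exact (Category.id_comp _).symm
  rw [heq]
  haveI := isIso_ι_const (X.obj ⊥) (⊥ : Λ)
  exact M.W_comp _ _ (M.W_of_isIso _ inferInstance) hW

end EngineW
section Push

variable {C : Type u} [Category.{v} C] [HasPushouts C]
variable {Λ : Type v} [LinearOrder Λ] [OrderBot Λ] [SuccOrder Λ] [WellFoundedLT Λ]
variable (X : Λ ⥤ C) {A : C} (g : X.obj ⊥ ⟶ A)

/-- The chain of pushouts of `X` along `g`. -/
noncomputable def pushChain : Λ ⥤ C where
  obj γ := pushout (X.map (homOfLE (bot_le : ⊥ ≤ γ))) g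
  map {γ γ'} f := pushout.desc
    (X.map (homOfLE (leOfHom f)) ≫ pushout.inl (X.map (homOfLE (bot_le : ⊥ ≤ γ'))) g)
    (pushout.inr (X.map (homOfLE (bot_le : ⊥ ≤ γ'))) g)
    (by rw [← Category.assoc, mapLE_comp X _ _ bot_le, pushout.condition])
  map_id γ := by
    apply pushout.hom_ext
    · rw [pushout.inl_desc, Category.comp_id, mapLE_self, Category.id_comp]
    · rw [pushout.inr_desc, Category.comp_id]
  map_comp {γ γ' γ''} f h := by
    apply pushout.hom_ext
    · rw [pushout.inl_desc, ← Category.assoc, pushout.inl_desc, Category.assoc,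
        pushout.inl_desc, ← Category.assoc, mapLE_comp X _ _ (leOfHom (f ≫ h))]
    · rw [pushout.inr_desc, ← Category.assoc, pushout.inr_desc, pushout.inr_desc]

lemma pushChain_inl_natural {γ γ' : Λ} (h : γ ≤ γ') :
    pushout.inl (X.map (homOfLE (bot_le : ⊥ ≤ γ))) g ≫ (pushChain X g).map (homOfLE h) =
    X.map (homOfLE h) ≫ pushout.inl (X.map (homOfLE (bot_le : ⊥ ≤ γ'))) g :=
  pushout.inl_desc _ _ _

lemma pushChain_inr_natural {γ γ' : Λ} (h : γ ≤ γ') :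
    pushout.inr (X.map (homOfLE (bot_le : ⊥ ≤ γ))) g ≫ (pushChain X g).map (homOfLE h) =
    pushout.inr (X.map (homOfLE (bot_le : ⊥ ≤ γ'))) g :=
  pushout.inr_desc _ _ _

lemma pushChain_step {γ γ' : Λ} (h : γ ≤ γ') :
    IsPushout (X.map (homOfLE h)) (pushout.inl (X.map (homOfLE (bot_le : ⊥ ≤ γ))) g)
      (pushout.inl (X.map (homOfLE (bot_le : ⊥ ≤ γ'))) g)
      ((pushChain X g).map (homOfLE h)) := by
  have s := IsPushout.of_hasPushout (X.map (homOfLE (bot_le : ⊥ ≤ γ))) g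
  have sbig : IsPushout (X.map (homOfLE (bot_le : ⊥ ≤ γ)) ≫ X.map (homOfLE h)) g
      (pushout.inl (X.map (homOfLE (bot_le : ⊥ ≤ γ'))) g)
      (pushout.inr (X.map (homOfLE (bot_le : ⊥ ≤ γ))) g ≫ (pushChain X g).map (homOfLE h)) := by
    erw [mapLE_comp X _ _ bot_le, pushChain_inr_natural]
    exact IsPushout.of_hasPushout _ _
  exact sbig.of_left (pushChain_inl_natural X g h).symm s

/-- The induced cocone on the restriction of `X` from a cocone on the restricted
pushout chain. -/
noncomputable def pushChainDescCocone (β' : Λ) (c : Cocone (iioFunctor β' ⋙ pushChain X g)) :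
    Cocone (iioFunctor β' ⋙ X) where
  pt := c.pt
  ι :=
    { app := fun γ => pushout.inl (X.map (homOfLE (bot_le : ⊥ ≤ (γ : Λ)))) g ≫ c.ι.app γ
      naturality := fun γ γ' f => by
        dsimp only [Functor.const_obj_map]
        have e : (pushChain X g).map (homOfLE (leOfHom f : (γ : Λ) ≤ (γ' : Λ))) ≫
            c.ι.app γ' = c.ι.app γ := c.w f
        have l := (pushChain_inl_natural X g (leOfHom f : (γ : Λ) ≤ (γ' : Λ))).symm
        calc X.map (homOfLE (leOfHom f : (γ : Λ) ≤ (γ' : Λ))) ≫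
              pushout.inl (X.map (homOfLE (bot_le : ⊥ ≤ (γ' : Λ)))) g ≫ c.ι.app γ'
            = (X.map (homOfLE (leOfHom f : (γ : Λ) ≤ (γ' : Λ))) ≫
              pushout.inl (X.map (homOfLE (bot_le : ⊥ ≤ (γ' : Λ)))) g) ≫ c.ι.app γ' :=
              (Category.assoc _ _ _).symm
          _ = (pushout.inl (X.map (homOfLE (bot_le : ⊥ ≤ (γ : Λ)))) g ≫
              (pushChain X g).map (homOfLE (leOfHom f : (γ : Λ) ≤ (γ' : Λ)))) ≫
              c.ι.app γ' := by rw [l]; rfl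
          _ = pushout.inl (X.map (homOfLE (bot_le : ⊥ ≤ (γ : Λ)))) g ≫ c.ι.app γ := by
              erw [Category.assoc, e]
          _ = (pushout.inl (X.map (homOfLE (bot_le : ⊥ ≤ (γ : Λ)))) g ≫ c.ι.app γ) ≫
              𝟙 c.pt := (Category.comp_id _).symm }

lemma pushChain_inr_cocone_const {β' : Λ} (c : Cocone (iioFunctor β' ⋙ pushChain X g))
    (γ δ : Set.Iio β') :
    pushout.inr (X.map (homOfLE (bot_le : ⊥ ≤ (γ : Λ)))) g ≫ c.ι.app γ =
    pushout.inr (X.map (homOfLE (bot_le : ⊥ ≤ (δ : Λ)))) g ≫ c.ι.app δ := by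
  have hμ : max (γ : Λ) (δ : Λ) < β' := max_lt γ.2 δ.2
  have e1 : (pushChain X g).map (homOfLE (le_max_left (γ : Λ) (δ : Λ))) ≫
      c.ι.app ⟨_, hμ⟩ = c.ι.app γ := c.w (iioHom γ ⟨_, hμ⟩ (le_max_left _ _))
  have e2 : (pushChain X g).map (homOfLE (le_max_right (γ : Λ) (δ : Λ))) ≫
      c.ι.app ⟨_, hμ⟩ = c.ι.app δ := c.w (iioHom δ ⟨_, hμ⟩ (le_max_right _ _))
  erw [← e1, ← e2, ← Category.assoc, ← Category.assoc,
    pushChain_inr_natural, pushChain_inr_natural]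

lemma pushChain_iio {β' : Λ} (hβ : Order.IsSuccLimit β') (hc : IsColimit (iioCocone β' X)) :
    Nonempty (IsColimit (iioCocone β' (pushChain X g))) := by
  obtain ⟨γ₀', hγ₀⟩ := not_isMin_iff.mp hβ.not_isMin
  set γ₀ : Set.Iio β' := ⟨γ₀', hγ₀⟩ with hγ₀def
  refine ⟨⟨fun c => pushout.desc (hc.desc (pushChainDescCocone X g β' c))
    (pushout.inr (X.map (homOfLE (bot_le : ⊥ ≤ (γ₀ : Λ)))) g ≫ c.ι.app γ₀) ?_, ?_, ?_⟩⟩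
  · -- commutation for desc
    have hfac : X.map (homOfLE hγ₀.le) ≫ hc.desc (pushChainDescCocone X g β' c) =
        pushout.inl (X.map (homOfLE (bot_le : ⊥ ≤ (γ₀ : Λ)))) g ≫ c.ι.app γ₀ :=
      hc.fac (pushChainDescCocone X g β' c) γ₀
    erw [← mapLE_comp X (bot_le : (⊥ : Λ) ≤ (γ₀ : Λ)) hγ₀.le bot_le, Category.assoc, hfac,
      ← Category.assoc, pushout.condition, Category.assoc]
  · -- fac
    intro c γ
    apply pushout.hom_ext
    · have hl : pushout.inl (X.map (homOfLE (bot_le : ⊥ ≤ (γ : Λ)))) g ≫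
          (pushChain X g).map (homOfLE γ.2.le) =
          X.map (homOfLE γ.2.le) ≫ pushout.inl (X.map (homOfLE (bot_le : ⊥ ≤ β'))) g :=
        pushChain_inl_natural X g γ.2.le
      erw [← Category.assoc]
      show (pushout.inl (X.map (homOfLE (bot_le : ⊥ ≤ (γ : Λ)))) g ≫
        (pushChain X g).map (homOfLE γ.2.le)) ≫ _ = _
      erw [hl, Category.assoc, pushout.inl_desc]
      exact hc.fac (pushChainDescCocone X g β' c) γ
    · have hr : pushout.inr (X.map (homOfLE (bot_le : ⊥ ≤ (γ : Λ)))) g ≫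
          (pushChain X g).map (homOfLE γ.2.le) =
          pushout.inr (X.map (homOfLE (bot_le : ⊥ ≤ β'))) g :=
        pushChain_inr_natural X g γ.2.le
      erw [← Category.assoc]
      show (pushout.inr (X.map (homOfLE (bot_le : ⊥ ≤ (γ : Λ)))) g ≫
        (pushChain X g).map (homOfLE γ.2.le)) ≫ _ = _
      erw [hr, pushout.inr_desc]
      exact (pushChain_inr_cocone_const X g c γ₀ γ)
  · -- uniq
    intro c m hm
    apply pushout.hom_ext
    · erw [pushout.inl_desc]
      refine hc.uniq (pushChainDescCocone X g β' c) _ ?_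
      intro γ
      have hl := pushChain_inl_natural X g γ.2.le
      have hmγ : (pushChain X g).map (homOfLE γ.2.le) ≫ m = c.ι.app γ := hm γ
      show X.map (homOfLE γ.2.le) ≫ pushout.inl (X.map (homOfLE (bot_le : ⊥ ≤ β'))) g ≫ m =
        pushout.inl (X.map (homOfLE (bot_le : ⊥ ≤ (γ : Λ)))) g ≫ c.ι.app γ
      erw [← Category.assoc, ← hl, Category.assoc, hmγ]
    · erw [pushout.inr_desc]
      have hr := pushChain_inr_natural X g (γ₀.2.le : (γ₀ : Λ) ≤ β')
      have hmγ : (pushChain X g).map (homOfLE γ₀.2.le) ≫ m = c.ι.app γ₀ := hm γ₀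
      erw [← hr, Category.assoc, hmγ]

end Push
section PushP

variable {C : Type u} [Category.{v} C]

lemma hasPushouts_of_cocomplete [HasColimitsOfSize.{v, v} C] : HasPushouts C := by
  haveI : HasColimitsOfSize.{0, 0} C := hasColimitsOfSizeShrink C
  infer_instance

variable [HasPushouts C]
variable {Λ : Type v} [LinearOrder Λ] [OrderBot Λ] [SuccOrder Λ] [WellFoundedLT Λ]
variable (X : Λ ⥤ C) {A : C} (g : X.obj ⊥ ⟶ A)

lemma pushChain_inr_cocone_const' (c : Cocone (pushChain X g)) (γ δ : Λ) :
    pushout.inr (X.map (homOfLE (bot_le : ⊥ ≤ γ))) g ≫ c.ι.app γ =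
    pushout.inr (X.map (homOfLE (bot_le : ⊥ ≤ δ))) g ≫ c.ι.app δ := by
  have e1 : (pushChain X g).map (homOfLE (le_max_left γ δ)) ≫
      c.ι.app (max γ δ) = c.ι.app γ := c.w (homOfLE (le_max_left γ δ))
  have e2 : (pushChain X g).map (homOfLE (le_max_right γ δ)) ≫
      c.ι.app (max γ δ) = c.ι.app δ := c.w (homOfLE (le_max_right γ δ))
  erw [← e1, ← e2, ← Category.assoc, ← Category.assoc,
    pushChain_inr_natural, pushChain_inr_natural]

variable [HasColimit X]
variable {P : C} (inl : colimit X ⟶ P) (inr : A ⟶ P)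

/-- The cocone on the pushout chain with apex `P`, for `P` a pushout of the
transfinite composition along `g`. -/
noncomputable def pushChainPCocone (hpo : IsPushout (colimit.ι X ⊥) g inl inr) :
    Cocone (pushChain X g) where
  pt := P
  ι :=
    { app := fun γ => pushout.desc (colimit.ι X γ ≫ inl) inr
        (by rw [← Category.assoc, colimit.w X (homOfLE bot_le), hpo.w])
      naturality := fun γ γ' f => by
        dsimp only [Functor.const_obj_map]
        have hf : f = homOfLE (leOfHom f) := Subsingleton.elim _ _
        rw [hf]
        apply pushout.hom_ext
        · erw [← Category.assoc, pushChain_inl_natural, Category.assoc, pushout.inl_desc,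
            ← Category.assoc, colimit.w, ← Category.assoc, pushout.inl_desc]
          exact (Category.comp_id _).symm
        · erw [← Category.assoc, pushChain_inr_natural, pushout.inr_desc, ← Category.assoc,
            pushout.inr_desc]
          exact (Category.comp_id _).symm }

/-- The cocone on `X` induced by a cocone on the pushout chain. -/
noncomputable def pushChainToXCocone (c : Cocone (pushChain X g)) : Cocone X where
  pt := c.pt
  ι :=
    { app := fun γ => pushout.inl (X.map (homOfLE (bot_le : ⊥ ≤ γ))) g ≫ c.ι.app γ
      naturality := fun γ γ' f => by
        dsimp only [Functor.const_obj_map]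
        have hf : f = homOfLE (leOfHom f) := Subsingleton.elim _ _
        rw [hf]
        have e : (pushChain X g).map (homOfLE (leOfHom f)) ≫ c.ι.app γ' = c.ι.app γ :=
          c.w (homOfLE (leOfHom f))
        erw [← e, ← Category.assoc, ← Category.assoc, pushChain_inl_natural]
        exact (Category.comp_id _).symm }

/-- The cocone `pushChainPCocone` is a colimit cocone. -/
noncomputable def pushChainPIsColimit (hpo : IsPushout (colimit.ι X ⊥) g inl inr) :
    IsColimit (pushChainPCocone X g inl inr hpo) where
  desc c := hpo.desc (colimit.desc X (pushChainToXCocone X g c))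
    (pushout.inr (X.map (homOfLE (bot_le : (⊥ : Λ) ≤ ⊥))) g ≫ c.ι.app ⊥)
    (by
      erw [colimit.ι_desc]
      have hw := (pushChainToXCocone X g c).w (homOfLE (bot_le : (⊥ : Λ) ≤ ⊥))
      rw [← hw]
      show X.map (homOfLE (bot_le : (⊥ : Λ) ≤ ⊥)) ≫
        pushout.inl (X.map (homOfLE (bot_le : (⊥ : Λ) ≤ ⊥))) g ≫ c.ι.app ⊥ = _
      erw [← Category.assoc, pushout.condition, Category.assoc])
  fac c γ := by
    dsimp only [pushChainPCocone]
    apply pushout.hom_ext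
    · erw [← Category.assoc, pushout.inl_desc, Category.assoc, hpo.inl_desc, colimit.ι_desc]
      rfl
    · erw [← Category.assoc, pushout.inr_desc, hpo.inr_desc]
      exact pushChain_inr_cocone_const' X g c ⊥ γ
  uniq c m hm := by
    apply hpo.hom_ext
    · erw [hpo.inl_desc]
      apply colimit.hom_ext
      intro γ
      erw [colimit.ι_desc]
      show colimit.ι X γ ≫ inl ≫ m =
        pushout.inl (X.map (homOfLE (bot_le : ⊥ ≤ γ))) g ≫ c.ι.app γ
      rw [← hm γ]
      dsimp only [pushChainPCocone]
      erw [← Category.assoc (pushout.inl _ _)]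
      erw [pushout.inl_desc]
      exact (Category.assoc _ _ _).symm
    · erw [hpo.inr_desc]
      show inr ≫ m =
        pushout.inr (X.map (homOfLE (bot_le : (⊥ : Λ) ≤ ⊥))) g ≫ c.ι.app ⊥
      rw [← hm ⊥]
      dsimp only [pushChainPCocone]
      erw [← Category.assoc]
      erw [pushout.inr_desc]

end PushP
section Final

variable {C : Type u} [Category.{v} C] [MonoidalCategory C] [HasColimitsOfSize.{v, v} C]
variable (M : MonoidalModel C)
variable {Λ : Type v} [LinearOrder Λ] [OrderBot Λ] [SuccOrder Λ] [WellFoundedLT Λ]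

lemma engine_couniv (X : Λ ⥤ C) [HasColimit X] (hperf : KPerfect M.W (monSaturation M.Cof))
    (hlim : ∀ β : Λ, Order.IsSuccLimit β → Nonempty (IsColimit (iioCocone β X)))
    (hsucc : ∀ α : Λ, ¬IsMax α → monSaturation M.Cof (X.map (homOfLE (Order.le_succ α))) ∧
      Couniversal M.toModelStruct (X.map (homOfLE (Order.le_succ α)))) :
    Couniversal M.toModelStruct (colimit.ι X ⊥) := by
  haveI : HasPushouts C := hasPushouts_of_cocomplete
  refine ⟨engine_W X M hperf hlim (fun α hα => ⟨(hsucc α hα).1, (hsucc α hα).2.1⟩), ?_⟩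
  intro A P g inl inr hpo
  have hlim' : ∀ β : Λ, Order.IsSuccLimit β →
      Nonempty (IsColimit (iioCocone β (pushChain X g))) := by
    intro β hβ
    obtain ⟨hc⟩ := hlim β hβ
    exact pushChain_iio X g hβ hc
  have hsucc' : ∀ α : Λ, ¬IsMax α →
      monSaturation M.Cof ((pushChain X g).map (homOfLE (Order.le_succ α))) ∧
      M.W ((pushChain X g).map (homOfLE (Order.le_succ α))) := by
    intro α hα
    have hs := pushChain_step X g (Order.le_succ α)
    exact ⟨(monSat_sat M.Cof).2.1 _ _ _ _ hs (hsucc α hα).1,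
      (hsucc α hα).2.2 _ _ _ hs⟩
  have hW' : M.W (colimit.ι (pushChain X g) ⊥) :=
    engine_W (pushChain X g) M hperf hlim' hsucc'
  have hPc := pushChainPIsColimit X g inl inr hpo
  have hι : colimit.ι (pushChain X g) ⊥ ≫
      (IsColimit.coconePointUniqueUpToIso (colimit.isColimit (pushChain X g)) hPc).hom =
      (pushChainPCocone X g inl inr hpo).ι.app ⊥ :=
    IsColimit.comp_coconePointUniqueUpToIso_hom _ _ ⊥
  have hinr : inr = pushout.inr (X.map (homOfLE (bot_le : (⊥ : Λ) ≤ ⊥))) g ≫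
      colimit.ι (pushChain X g) ⊥ ≫
      (IsColimit.coconePointUniqueUpToIso (colimit.isColimit (pushChain X g)) hPc).hom := by
    erw [hι]
    dsimp only [pushChainPCocone]
    rw [pushout.inr_desc]
  rw [hinr]
  haveI : IsIso (X.map (homOfLE (bot_le : (⊥ : Λ) ≤ ⊥))) := isIso_mapLE X _ le_rfl
  haveI : IsIso (pushout.inr (X.map (homOfLE (bot_le : (⊥ : Λ) ≤ ⊥))) g) :=
    isIso_inr_of_isPushout (IsPushout.of_hasPushout _ _)
  exact M.W_comp _ _ (M.W_of_isIso _ inferInstance)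
    (M.W_comp _ _ hW' (M.W_of_isIso (IsColimit.coconePointUniqueUpToIso (colimit.isColimit (pushChain X g)) hPc).hom inferInstance))

end Final

variable {C : Type u} [Category.{v} C] [MonoidalCategory C]
/-- In a cocomplete monoidal model category whose class of weak equivalences is
⊗-perfect (perfect with respect to the monoidal saturation of the cofibrations),
the monoid axiom of Schwede–Shipley holds if and only if the tensor product of a
trivial cofibration with an arbitrary object is a couniversal weak equivalence. -/
theorem statement_15 [HasColimitsOfSize.{v, v} C]
    (M : MonoidalModel C)
    (hperf : KPerfect M.W (monSaturation M.Cof)) :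
    (∀ {X Y : C} (f : X ⟶ Y),
        monSaturation (fun {_ _ : C} g => M.Cof g ∧ M.W g) f → M.W f) ↔
      (∀ {X Y : C} (j : X ⟶ Y), M.Cof j → M.W j → ∀ Z : C,
        Couniversal M.toModelStruct (j ▷ Z)) := by
  constructor
  · intro hmon X Y j hcof hw Z
    refine ⟨hmon _ (fun K hK => hK.1 j ⟨hcof, hw⟩ Z), ?_⟩
    intro A P g inl inr hpo
    exact hmon _ (fun K hK => hK.2.1 _ g inl inr hpo (hK.1 j ⟨hcof, hw⟩ Z))
  · intro hcu X Y f hf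
    haveI : HasPushouts C := hasPushouts_of_cocomplete
    refine (hf (fun {_ _} k => monSaturation (fun {_ _ : C} g => M.Cof g ∧ M.W g) k ∧
      Couniversal M.toModelStruct k) ⟨?_, ?_, ?_, ?_⟩).2.1
    · intro A B k hk Z
      exact ⟨(monSat_sat _).1 k hk Z, hcu k hk.1 hk.2 Z⟩
    · intro A B A' P k g inl inr hpo hK
      exact ⟨(monSat_sat _).2.1 k g inl inr hpo hK.1, couniv_cobase hK.2 hpo⟩
    · intro A B A' B' k k' i r j s hir hjs h1 h2 hK
      exact ⟨(monSat_sat _).2.2.1 k k' i r j s hir hjs h1 h2 hK.1,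
        couniv_retract k k' i r j s hir hjs h1 h2 hK.2⟩
    · intro Λ _ _ _ _ X _ hlim hsucc
      refine ⟨(monSat_sat _).2.2.2 Λ X hlim (fun α hα => (hsucc α hα).1), ?_⟩
      exact engine_couniv M X hperf hlim (fun α hα =>
        ⟨monSat_mono (fun f hf => hf.1) (hsucc α hα).1, (hsucc α hα).2⟩)
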